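/- Let β > 0, μ ≥ 0, let F⁰ : ℝ^d → ℝ be β-smooth, let f¹ : ℝ^d → ℝ be convex, set F := F⁰ + f¹, and suppose F is bounded below with F* := inf_{w'∈ℝ^d} F(w'). Fix w ∈ ℝ^d and suppose the proximal-PL inequality μ·(F(w) − F*) ≤ −β · inf_{y∈ℝ^d} [⟨∇F⁰(w), y − w⟩ + (β/2)‖y − w‖² + f¹(y) − f¹(w)] holds at w. For any u ∈ ℝ^d (a noise/perturbation vector), let w⁺ := prox_{(1/(2β)) f¹}(w − (1/(2β))(∇F⁰(w) + u)) be the noisy proximal gradient step. Then F(w⁺) − F* ≤ (1 − μ/(2β))·(F(w) − F*) + ‖u‖²/(2β). -/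

import Mathlib

open scoped RealInnerProductSpace


lemma descent_lemma {d : ℕ} {β : ℝ} (hβ : 0 ≤ β) {F0 : EuclideanSpace ℝ (Fin d) → ℝ}
    (hdiff : Differentiable ℝ F0)
    (hsmooth : ∀ x y, ‖gradient F0 x - gradient F0 y‖ ≤ β * ‖x - y‖)
    (x y : EuclideanSpace ℝ (Fin d)) :
    F0 y ≤ F0 x + ⟪gradient F0 x, y - x⟫ + β / 2 * ‖y - x‖ ^ 2 := by
  set Δ := y - x with hΔ
  set φ : ℝ → ℝ := fun t => F0 (x + t • Δ) - t * ⟪gradient F0 x, Δ⟫ - β / 2 * t ^ 2 * ‖Δ‖ ^ 2 with hφ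
  have hline : ∀ t : ℝ, HasDerivAt (fun s : ℝ => x + s • Δ) Δ t := by
    intro t
    simpa using ((hasDerivAt_id t).smul_const Δ).const_add x
  have hF : ∀ t : ℝ, HasDerivAt (fun s : ℝ => F0 (x + s • Δ))
      ⟪gradient F0 (x + t • Δ), Δ⟫ t := by
    intro t
    have h2 := (hdiff (x + t • Δ)).hasGradientAt
    have := h2.hasFDerivAt.comp_hasDerivAt t (hline t)
    exact this.congr_deriv (by simp [InnerProductSpace.toDual_apply_apply, real_inner_comm])
  have hφd : ∀ t : ℝ, HasDerivAt φ
      (⟪gradient F0 (x + t • Δ), Δ⟫ - ⟪gradient F0 x, Δ⟫ - β * t * ‖Δ‖ ^ 2) t := by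
    intro t
    have h1 : HasDerivAt (fun s : ℝ => s * ⟪gradient F0 x, Δ⟫) ⟪gradient F0 x, Δ⟫ t := by
      simpa using (hasDerivAt_id t).mul_const ⟪gradient F0 x, Δ⟫
    have h2 : HasDerivAt (fun s : ℝ => β / 2 * s ^ 2 * ‖Δ‖ ^ 2) (β * t * ‖Δ‖ ^ 2) t := by
      have := ((hasDerivAt_pow 2 t).const_mul (β / 2)).mul_const (‖Δ‖ ^ 2)
      exact this.congr_deriv (by ring)
    exact ((hF t).sub h1).sub h2
  have hderiv_nonpos : ∀ t ∈ Set.Ioo (0:ℝ) 1, deriv φ t ≤ 0 := by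
    intro t ht
    rw [(hφd t).deriv]
    have h1 : ⟪gradient F0 (x + t • Δ), Δ⟫ - ⟪gradient F0 x, Δ⟫
        = ⟪gradient F0 (x + t • Δ) - gradient F0 x, Δ⟫ := by
      rw [inner_sub_left]
    rw [h1]
    have h2 : ⟪gradient F0 (x + t • Δ) - gradient F0 x, Δ⟫
        ≤ ‖gradient F0 (x + t • Δ) - gradient F0 x‖ * ‖Δ‖ := real_inner_le_norm _ _
    have h3 : ‖gradient F0 (x + t • Δ) - gradient F0 x‖ ≤ β * (t * ‖Δ‖) := by
      have := hsmooth (x + t • Δ) x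
      simpa [norm_smul, abs_of_pos ht.1] using this
    nlinarith [norm_nonneg Δ, ht.1.le]
  have hanti : AntitoneOn φ (Set.Icc (0:ℝ) 1) := by
    apply antitoneOn_of_deriv_nonpos (convex_Icc 0 1)
    · exact Continuous.continuousOn (by
        have : Differentiable ℝ φ := fun t => (hφd t).differentiableAt
        exact this.continuous)
    · intro t _; exact (hφd t).differentiableAt.differentiableWithinAt
    · intro t ht
      rw [interior_Icc] at ht
      exact hderiv_nonpos t ht
  have := hanti (Set.left_mem_Icc.2 zero_le_one) (Set.right_mem_Icc.2 zero_le_one) zero_le_one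
  have hx1 : x + Δ = y := by simp [hΔ]
  have h0 : φ 0 = F0 x := by
    simp only [hφ, zero_smul, add_zero, zero_mul, sub_zero]
    ring_nf
  have h1 : φ 1 = F0 y - ⟪gradient F0 x, Δ⟫ - β / 2 * ‖Δ‖ ^ 2 := by
    simp only [hφ, one_smul, hx1, one_mul, one_pow]
    ring
  rw [h0, h1] at this
  linarith

lemma midpt_sq {d : ℕ} (a b c : EuclideanSpace ℝ (Fin d)) :
    ‖(1/2 : ℝ) • (a + b) - c‖ ^ 2
      = (1/2) * ‖a - c‖ ^ 2 + (1/2) * ‖b - c‖ ^ 2 - (1/4) * ‖a - b‖ ^ 2 := by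
  have h1 : (1/2 : ℝ) • (a + b) - c = (1/2 : ℝ) • ((a - c) + (b - c)) := by module
  have h2 : a - b = (a - c) - (b - c) := by abel
  have e1 := norm_add_sq_real (a - c) (b - c)
  have e2 := norm_sub_sq_real (a - c) (b - c)
  rw [h1, h2, norm_smul, mul_pow, Real.norm_eq_abs, sq_abs, e1, e2]
  ring

set_option maxHeartbeats 1000000 in
lemma per_y {d : ℕ} {β : ℝ} (hβ : 0 < β) {f1 : EuclideanSpace ℝ (Fin d) → ℝ}
    (hconv : ConvexOn ℝ Set.univ f1) (w u wplus g y : EuclideanSpace ℝ (Fin d))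
    (a b : ℝ)
    (hdesc : a ≤ b + ⟪g, wplus - w⟫ + β / 2 * ‖wplus - w‖ ^ 2)
    (hw : ∀ v,
      (1 / (2 * β)) * f1 wplus + (1 / 2) * ‖wplus - (w - (1 / (2 * β)) • (g + u))‖ ^ 2
        ≤ (1 / (2 * β)) * f1 v + (1 / 2) * ‖v - (w - (1 / (2 * β)) • (g + u))‖ ^ 2) :
    2 * (a + f1 wplus - (b + f1 w) - ‖u‖ ^ 2 / (2 * β))
      ≤ ⟪g, y - w⟫ + (β / 2) * ‖y - w‖ ^ 2 + f1 y - f1 w := by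
  set c := w - (1 / (2 * β)) • (g + u) with hc
  have hb : (0:ℝ) < 1 / (2 * β) := by positivity
  -- midpoint convexity of f1
  have hmidf : ∀ p q : EuclideanSpace ℝ (Fin d),
      f1 ((1/2 : ℝ) • (p + q)) ≤ (1/2) * f1 p + (1/2) * f1 q := by
    intro p q
    have := hconv.2 (Set.mem_univ p) (Set.mem_univ q)
      (by norm_num : (0:ℝ) ≤ 1/2) (by norm_num : (0:ℝ) ≤ 1/2) (by norm_num)
    have hpt : (1/2 : ℝ) • (p + q) = (1/2 : ℝ) • p + (1/2 : ℝ) • q := by module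
    rw [hpt]
    simpa using this
  -- strong minimality
  have hmin : ∀ z, f1 wplus + β * ‖wplus - c‖ ^ 2 + (β/2) * ‖wplus - z‖ ^ 2
      ≤ f1 z + β * ‖z - c‖ ^ 2 := by
    intro z
    have h1 := hw ((1/2 : ℝ) • (wplus + z))
    have h2 := midpt_sq wplus z c
    have h3 := mul_le_mul_of_nonneg_left (hmidf wplus z) hb.le
    have hsmall : (1/(2*β)) * f1 wplus + (1/2) * ‖wplus - c‖ ^ 2 + (1/4) * ‖wplus - z‖ ^ 2
        ≤ (1/(2*β)) * f1 z + (1/2) * ‖z - c‖ ^ 2 := by linarith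
    have h2β : (0:ℝ) < 2 * β := by linarith
    calc f1 wplus + β * ‖wplus - c‖ ^ 2 + (β/2) * ‖wplus - z‖ ^ 2
        = 2 * β * ((1/(2*β)) * f1 wplus + (1/2) * ‖wplus - c‖ ^ 2 + (1/4) * ‖wplus - z‖ ^ 2) := by
          field_simp; ring
      _ ≤ 2 * β * ((1/(2*β)) * f1 z + (1/2) * ‖z - c‖ ^ 2) :=
          mul_le_mul_of_nonneg_left hsmall h2β.le
      _ = f1 z + β * ‖z - c‖ ^ 2 := by field_simp
  -- expansion of β‖v - c‖²
  have hexpβ : ∀ v : EuclideanSpace ℝ (Fin d), β * ‖v - c‖ ^ 2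
      = β * ‖v - w‖ ^ 2 + ⟪v - w, g + u⟫ + (1/(4*β)) * ‖g + u‖ ^ 2 := by
    intro v
    have h1 : v - c = (v - w) + (1/(2*β) : ℝ) • (g + u) := by rw [hc]; module
    rw [h1, norm_add_sq_real, real_inner_smul_right, norm_smul, mul_pow,
      Real.norm_eq_abs, sq_abs]
    field_simp
    ring
  set m := (1/2 : ℝ) • (w + y) with hm
  have hmw : m - w = (1/2 : ℝ) • (y - w) := by rw [hm]; module
  have hm2 : ‖m - w‖ ^ 2 = (1/4) * ‖y - w‖ ^ 2 := by
    rw [hmw, norm_smul, mul_pow, Real.norm_eq_abs, sq_abs]; ring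
  have hi1 : ⟪wplus - w, g + u⟫ = ⟪g, wplus - w⟫ + ⟪u, wplus - w⟫ := by
    rw [inner_add_right, real_inner_comm (wplus - w) g, real_inner_comm (wplus - w) u]
  have hi2 : ⟪m - w, g + u⟫ = (1/2) * ⟪g, y - w⟫ + (1/2) * ⟪u, y - w⟫ := by
    rw [hmw, real_inner_smul_left, inner_add_right, real_inner_comm (y - w) g,
      real_inner_comm (y - w) u]
    ring
  have hE1 : β * ‖wplus - c‖ ^ 2
      = β * ‖wplus - w‖ ^ 2 + (⟪g, wplus - w⟫ + ⟪u, wplus - w⟫) + (1/(4*β)) * ‖g + u‖ ^ 2 := by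
    rw [hexpβ wplus, hi1]
  have hE2 : β * ‖m - c‖ ^ 2
      = β * ((1/4) * ‖y - w‖ ^ 2) + ((1/2) * ⟪g, y - w⟫ + (1/2) * ⟪u, y - w⟫)
        + (1/(4*β)) * ‖g + u‖ ^ 2 := by
    rw [hexpβ m, hi2, hm2]
  have hA2 := hmin m
  rw [hE1, hE2] at hA2
  have hA3 := hmidf w y
  rw [← hm] at hA3
  -- Young's inequality
  have hiE5 : ⟪u, m - wplus⟫ = (1/2) * ⟪u, y - w⟫ - ⟪u, wplus - w⟫ := by
    have hr : m - wplus = (1/2 : ℝ) • (y - w) - (wplus - w) := by rw [hm]; module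
    rw [hr, inner_sub_right, real_inner_smul_right]
  have hyoung : (1/2) * ⟪u, y - w⟫ - ⟪u, wplus - w⟫
      ≤ (β/2) * ‖m - wplus‖ ^ 2 + ‖u‖ ^ 2 / (2 * β) := by
    rw [← hiE5]
    have h0 : (0:ℝ) ≤ ‖β • (m - wplus) - u‖ ^ 2 := sq_nonneg _
    rw [norm_sub_sq_real, real_inner_smul_left, norm_smul, mul_pow,
      Real.norm_eq_abs, sq_abs] at h0
    have hcomm : ⟪u, m - wplus⟫ = ⟪m - wplus, u⟫ := real_inner_comm _ _
    have key : (β/2) * ‖m - wplus‖ ^ 2 + ‖u‖ ^ 2 / (2 * β) - ⟪m - wplus, u⟫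
        = (β ^ 2 * ‖m - wplus‖ ^ 2 - 2 * (β * ⟪m - wplus, u⟫) + ‖u‖ ^ 2) / (2 * β) := by
      field_simp; ring
    have hd : (0:ℝ) ≤ (β ^ 2 * ‖m - wplus‖ ^ 2 - 2 * (β * ⟪m - wplus, u⟫) + ‖u‖ ^ 2) / (2 * β) :=
      div_nonneg (by linarith) (by positivity)
    rw [hcomm]
    linarith
  -- note ‖wplus - m‖ = ‖m - wplus‖
  have hnrev : ‖wplus - m‖ ^ 2 = ‖m - wplus‖ ^ 2 := by rw [norm_sub_rev]
  rw [hnrev] at hA2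
  have hβN : (0:ℝ) ≤ β * ‖wplus - w‖ ^ 2 := mul_nonneg hβ.le (sq_nonneg _)
  have hgoal : 2 * (a + f1 wplus - (b + f1 w) - ‖u‖ ^ 2 / (2 * β))
      ≤ ⟪g, y - w⟫ + (β / 2) * ‖y - w‖ ^ 2 + f1 y - f1 w := by
    nlinarith [hA2, hA3, hdesc, hyoung, hβN]
  exact hgoal

/-- Noisy proximal gradient step under the proximal-PL inequality: for `β`-smooth `F⁰`,
convex `f¹`, `F = F⁰ + f¹` bounded below with infimum `F*`, if
`μ(F(w) - F*) ≤ -β inf_y [⟪∇F⁰(w), y - w⟫ + (β/2)‖y-w‖² + f¹(y) - f¹(w)]` and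
`wplus = prox_{(1/(2β))f¹}(w - (1/(2β))(∇F⁰(w) + u))`, then
`F(wplus) - F* ≤ (1 - μ/(2β))(F(w) - F*) + ‖u‖²/(2β)`. -/theorem stmt10 {d : ℕ} (β μ : ℝ) (hβ : 0 < β) (hμ : 0 ≤ μ)
    (F0 f1 : EuclideanSpace ℝ (Fin d) → ℝ)
    (hdiff : Differentiable ℝ F0)
    (hsmooth : ∀ x y, ‖gradient F0 x - gradient F0 y‖ ≤ β * ‖x - y‖)
    (hconv : ConvexOn ℝ Set.univ f1)
    (hbdd : BddBelow (Set.range fun v => F0 v + f1 v))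
    (Fstar : ℝ) (hFstar : Fstar = ⨅ v, (F0 v + f1 v))
    (w u wplus : EuclideanSpace ℝ (Fin d))
    (hPL : μ * (F0 w + f1 w - Fstar) ≤
      -β * ⨅ y, (⟪gradient F0 w, y - w⟫ + (β / 2) * ‖y - w‖ ^ 2 + f1 y - f1 w))
    (hwplus : ∀ v,
      (1 / (2 * β)) * f1 wplus
          + (1 / 2) * ‖wplus - (w - (1 / (2 * β)) • (gradient F0 w + u))‖ ^ 2
        ≤ (1 / (2 * β)) * f1 v
          + (1 / 2) * ‖v - (w - (1 / (2 * β)) • (gradient F0 w + u))‖ ^ 2) :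
    F0 wplus + f1 wplus - Fstar
      ≤ (1 - μ / (2 * β)) * (F0 w + f1 w - Fstar) + ‖u‖ ^ 2 / (2 * β) := by
  have hdesc := descent_lemma hβ.le hdiff hsmooth w wplus
  have claim : ∀ y : EuclideanSpace ℝ (Fin d),
      2 * (F0 wplus + f1 wplus - (F0 w + f1 w) - ‖u‖ ^ 2 / (2 * β))
        ≤ ⟪gradient F0 w, y - w⟫ + (β / 2) * ‖y - w‖ ^ 2 + f1 y - f1 w := by
    intro y
    exact per_y hβ hconv w u wplus (gradient F0 w) y (F0 wplus) (F0 w) hdesc hwplus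
  have hIle : 2 * (F0 wplus + f1 wplus - (F0 w + f1 w) - ‖u‖ ^ 2 / (2 * β))
      ≤ ⨅ y, (⟪gradient F0 w, y - w⟫ + (β / 2) * ‖y - w‖ ^ 2 + f1 y - f1 w) :=
    le_ciInf claim
  set I := ⨅ y, (⟪gradient F0 w, y - w⟫ + (β / 2) * ‖y - w‖ ^ 2 + f1 y - f1 w) with hI
  have h2 : I / 2 + (μ / (2 * β)) * (F0 w + f1 w - Fstar) ≤ 0 := by
    have heq : I / 2 + (μ / (2 * β)) * (F0 w + f1 w - Fstar)
        = (β * I + μ * (F0 w + f1 w - Fstar)) / (2 * β) := by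
      field_simp
    rw [heq]
    apply div_nonpos_of_nonpos_of_nonneg
    · nlinarith [hPL]
    · positivity
  nlinarith [hIle, h2]
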